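/- Let x = (x₁, y) ∈ ℝ × ℝ^{n-1} with x ≠ 0, and c = (c₁, 0) with c₁ > 0, x ≠ ±c. Set r = |x|, r₁ = |x+c|, r₂ = |x−c|. Then (x+c)·x/(r₁ r) + (x−c)·x/(r₂ r) ≥ (|y|²/r)(1/r₁ + 1/r₂) ≥ 2|y|²/(r(r+|c|)) ≥ 0. -/

import Mathlib

/-- Quantitative geometric inequality at the core of the Cancellation Lemma:
for `x = (x₁, y) ≠ 0` and `c = (c₁, 0)` with `c₁ > 0`, `x ≠ ±c`, setting
`r = |x|`, `r₁ = |x+c|`, `r₂ = |x-c|`, one has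
`(x+c)·x/(r₁ r) + (x-c)·x/(r₂ r) ≥ (|y|²/r)(1/r₁ + 1/r₂) ≥ 2|y|²/(r(r+|c|)) ≥ 0`. -/
theorem stmt10 (n : ℕ) (hn : 2 ≤ n)
    (x c : EuclideanSpace ℝ (Fin n))
    (hc0 : ∀ i : Fin n, i ≠ ⟨0, by omega⟩ → c i = 0)
    (hc1 : 0 < c ⟨0, by omega⟩)
    (hx0 : x ≠ 0) (hxc : x ≠ c) (hxc' : x ≠ -c) :
    0 ≤ 2 * (‖x‖ ^ 2 - (x ⟨0, by omega⟩) ^ 2) / (‖x‖ * (‖x‖ + ‖c‖)) ∧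
    2 * (‖x‖ ^ 2 - (x ⟨0, by omega⟩) ^ 2) / (‖x‖ * (‖x‖ + ‖c‖))
      ≤ (‖x‖ ^ 2 - (x ⟨0, by omega⟩) ^ 2) / ‖x‖ * (1 / ‖x + c‖ + 1 / ‖x - c‖) ∧
    (‖x‖ ^ 2 - (x ⟨0, by omega⟩) ^ 2) / ‖x‖ * (1 / ‖x + c‖ + 1 / ‖x - c‖)
      ≤ (inner ℝ (x + c) x : ℝ) / (‖x + c‖ * ‖x‖) +
        (inner ℝ (x - c) x : ℝ) / (‖x - c‖ * ‖x‖) := by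
  set i0 : Fin n := ⟨0, by omega⟩ with hi0
  set x1 : ℝ := x i0 with hx1
  set c1 : ℝ := c i0 with hc1def
  set r : ℝ := ‖x‖ with hr
  set r1 : ℝ := ‖x + c‖ with hr1
  set r2 : ℝ := ‖x - c‖ with hr2
  have hrpos : 0 < r := norm_pos_iff.mpr hx0
  have hr1pos : 0 < r1 := norm_pos_iff.mpr (by
    intro h
    exact hxc' (by rwa [add_eq_zero_iff_eq_neg] at h))
  have hr2pos : 0 < r2 := norm_pos_iff.mpr (by
    intro h
    exact hxc (by rwa [sub_eq_zero] at h))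
  have hcnorm : 0 ≤ ‖c‖ := norm_nonneg c
  -- inner products
  have hinner_xc : (inner ℝ x c : ℝ) = x1 * c1 := by
    rw [PiLp.inner_apply, Finset.sum_eq_single i0]
    · simp [RCLike.inner_apply]
      rw [mul_comm]
    · intro i _ hi
      simp [hc0 i hi, RCLike.inner_apply]
    · simp
  have hinner_cx : (inner ℝ c x : ℝ) = x1 * c1 := by
    rw [real_inner_comm]; exact hinner_xc
  have hnormc : ‖c‖ ^ 2 = c1 ^ 2 := by
    rw [← real_inner_self_eq_norm_sq, PiLp.inner_apply, Finset.sum_eq_single i0]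
    · simp [RCLike.inner_apply, sq, hc1def]
    · intro i _ hi
      simp [hc0 i hi, RCLike.inner_apply]
    · simp
  have hx1sq : x1 ^ 2 ≤ r ^ 2 := by
    have h : r ^ 2 = ∑ i, (x i) ^ 2 := by
      rw [hr, ← real_inner_self_eq_norm_sq, PiLp.inner_apply]
      simp [RCLike.inner_apply, sq]
    rw [h]
    exact Finset.single_le_sum (fun i _ => sq_nonneg (x i)) (Finset.mem_univ _)
  have hy : (0:ℝ) ≤ r ^ 2 - x1 ^ 2 := by linarith
  -- law of cosines
  have hr1sq : r1 ^ 2 = r ^ 2 + 2 * (x1 * c1) + c1 ^ 2 := by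
    rw [hr1, ← real_inner_self_eq_norm_sq, inner_add_add_self, real_inner_self_eq_norm_sq,
      real_inner_self_eq_norm_sq, hinner_xc, hinner_cx, ← hr, hnormc]
    ring
  have hr2sq : r2 ^ 2 = r ^ 2 - 2 * (x1 * c1) + c1 ^ 2 := by
    rw [hr2, ← real_inner_self_eq_norm_sq, inner_sub_sub_self, real_inner_self_eq_norm_sq,
      real_inner_self_eq_norm_sq, hinner_xc, hinner_cx, ← hr, hnormc]
    ring
  -- Cauchy-Schwarz: c1^2 - r^2 ≤ r1 * r2
  have hCS : c1 ^ 2 - r ^ 2 ≤ r1 * r2 := by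
    have h1 : (inner ℝ (x + c) (x - c) : ℝ) = r ^ 2 - c1 ^ 2 := by
      rw [inner_sub_right, inner_add_left, inner_add_left, real_inner_self_eq_norm_sq,
        hinner_xc, hinner_cx, real_inner_self_eq_norm_sq, hnormc, ← hr]
      ring
    have h2 := abs_real_inner_le_norm (x + c) (x - c)
    rw [h1, ← hr1, ← hr2] at h2
    have := abs_le.mp h2
    linarith [this.1]
  -- inner terms
  have hip : (inner ℝ (x + c) x : ℝ) = r ^ 2 + c1 * x1 := by
    rw [inner_add_left, real_inner_self_eq_norm_sq, hinner_cx, ← hr]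
    ring
  have him : (inner ℝ (x - c) x : ℝ) = r ^ 2 - c1 * x1 := by
    rw [inner_sub_left, real_inner_self_eq_norm_sq, hinner_cx, ← hr]
    ring
  have hr1le : r1 ≤ r + ‖c‖ := norm_add_le x c
  have hr2le : r2 ≤ r + ‖c‖ := norm_sub_le x c
  have hrcpos : 0 < r + ‖c‖ := by linarith
  refine ⟨?_, ?_, ?_⟩
  · apply div_nonneg (by linarith) (by positivity)
  · have h1 : 1 / (r + ‖c‖) ≤ 1 / r1 := one_div_le_one_div_of_le hr1pos hr1le
    have h2 : 1 / (r + ‖c‖) ≤ 1 / r2 := one_div_le_one_div_of_le hr2pos hr2le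
    have heq : 2 * (r ^ 2 - x1 ^ 2) / (r * (r + ‖c‖))
        = (r ^ 2 - x1 ^ 2) / r * (1 / (r + ‖c‖) + 1 / (r + ‖c‖)) := by
      field_simp
      ring
    rw [heq]
    exact mul_le_mul_of_nonneg_left (by linarith) (div_nonneg hy hrpos.le)
  · rw [hip, him]
    have hsum : 0 < r1 + r2 := by linarith
    have hd : (r2 - r1) * (r1 + r2) = -(4 * (x1 * c1)) := by
      linear_combination hr2sq - hr1sq
    have h2 : 0 ≤ (r1 + r2) ^ 2 - 4 * c1 ^ 2 := by nlinarith [hr1sq, hr2sq, hCS]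
    have h : (x1 ^ 2 * (r1 + r2) + c1 * x1 * (r2 - r1)) * (r1 + r2)
        = x1 ^ 2 * ((r1 + r2) ^ 2 - 4 * c1 ^ 2) := by
      linear_combination (c1 * x1) * hd
    have hkey : 0 ≤ x1 ^ 2 * (r1 + r2) + c1 * x1 * (r2 - r1) := by
      have h3 : 0 * (r1 + r2) ≤ (x1 ^ 2 * (r1 + r2) + c1 * x1 * (r2 - r1)) * (r1 + r2) := by
        rw [zero_mul, h]; exact mul_nonneg (sq_nonneg x1) h2
      exact le_of_mul_le_mul_right h3 hsum
    have hrne : r ≠ 0 := hrpos.ne'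
    have hr1ne : r1 ≠ 0 := hr1pos.ne'
    have hr2ne : r2 ≠ 0 := hr2pos.ne'
    have key2 : (r ^ 2 + c1 * x1) / (r1 * r) + (r ^ 2 - c1 * x1) / (r2 * r)
        - (r ^ 2 - x1 ^ 2) / r * (1 / r1 + 1 / r2)
        = (x1 ^ 2 * (r1 + r2) + c1 * x1 * (r2 - r1)) / (r * r1 * r2) := by
      field_simp
      ring
    have hpos : (0:ℝ) ≤ (x1 ^ 2 * (r1 + r2) + c1 * x1 * (r2 - r1)) / (r * r1 * r2) :=
      div_nonneg hkey (by positivity)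
    linarith [key2, hpos]
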